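/- Under the same setting, ‖a†(f) e^{−βH_B}‖²_HS ≤ ‖f‖² [ −(1/m)(d/d(2β)) + 1 ] Z(2β). -/

import Mathlib

open Filter Topology

/-- The occupancy-number basis vector `|n⟩` of the Bose–Fock space. -/
def fockBasis (n : ℕ →₀ ℕ) : (ℕ →₀ ℕ) → ℂ := fun m => if m = n then 1 else 0

/-- The smeared annihilation operator `a(f) = ∑ₖ f̄ₖ aₖ` on coefficient functions. -/
noncomputable def fockAnn (f : ℕ → ℂ) (ψ : (ℕ →₀ ℕ) → ℂ) : (ℕ →₀ ℕ) → ℂ :=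
  fun m => ∑' k : ℕ,
    (starRingEnd ℂ) (f k) * (Real.sqrt ((m k : ℝ) + 1) : ℂ) * ψ (m + Finsupp.single k 1)

/-- The smeared creation operator `a†(f) = ∑ₖ fₖ aₖ†` on coefficient functions. -/
noncomputable def fockCre (f : ℕ → ℂ) (ψ : (ℕ →₀ ℕ) → ℂ) : (ℕ →₀ ℕ) → ℂ :=
  fun m => ∑' k : ℕ, f k * (Real.sqrt (m k : ℝ) : ℂ) * ψ (m - Finsupp.single k 1)

/-- The Gibbs exponential `e^{−βH_B}` acting diagonally on the occupancy number basis. -/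
noncomputable def fockGibbs (β : ℝ) (ω : ℕ → ℝ) (ψ : (ℕ →₀ ℕ) → ℂ) : (ℕ →₀ ℕ) → ℂ :=
  fun m => ((Real.exp (-β * (m.sum fun k v => ω k * (v : ℝ))) : ℝ) : ℂ) * ψ m

/-- The partition function `Z(s) = tr e^{−sH_B} = ∑_n e^{−s ∑ₖ nₖωₖ}` as a function of `s`. -/
noncomputable def Ztr (ω : ℕ → ℝ) : ℝ → ℝ :=
  fun s => ∑' n : ℕ →₀ ℕ, Real.exp (-s * (n.sum fun k v => ω k * (v : ℝ)))

/-- Total energy of an occupancy configuration. -/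
noncomputable def En (ω : ℕ → ℝ) (n : ℕ →₀ ℕ) : ℝ := n.sum fun k v => ω k * (v : ℝ)

lemma En_nonneg {ω : ℕ → ℝ} (hω : ∀ k, 0 ≤ ω k) (n : ℕ →₀ ℕ) : 0 ≤ En ω n :=
  Finset.sum_nonneg fun k _ => mul_nonneg (hω k) (Nat.cast_nonneg _)

lemma mode_le {ω : ℕ → ℝ} {m : ℝ} (hm : 0 < m) (hω : ∀ k, m ≤ ω k) (n : ℕ →₀ ℕ) (k : ℕ) :
    m * (n k : ℝ) ≤ En ω n := by
  rcases eq_or_ne (n k) 0 with h | h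
  · simp only [h, Nat.cast_zero, mul_zero]
    exact En_nonneg (fun j => hm.le.trans (hω j)) n
  · have hk : k ∈ n.support := Finsupp.mem_support_iff.2 h
    have h1 : ω k * (n k : ℝ) ≤ En ω n :=
      Finset.single_le_sum (f := fun j => ω j * (n j : ℝ))
        (fun j _ => mul_nonneg (hm.le.trans (hω j)) (Nat.cast_nonneg _)) hk
    have h2 : m * (n k : ℝ) ≤ ω k * (n k : ℝ) :=
      mul_le_mul_of_nonneg_right (hω k) (Nat.cast_nonneg _)
    linarith

lemma cre_on (f : ℕ → ℂ) (β : ℝ) (ω : ℕ → ℝ) (n : ℕ →₀ ℕ) (k : ℕ) :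
    fockCre f (fockGibbs β ω (fockBasis n)) (n + Finsupp.single k 1)
      = f k * (Real.sqrt ((n k : ℝ) + 1) : ℂ) * ((Real.exp (-β * En ω n) : ℝ) : ℂ) := by
  unfold fockCre fockGibbs fockBasis
  rw [tsum_eq_single k ?_]
  · have hcancel : (n + Finsupp.single k 1 - Finsupp.single k 1 : ℕ →₀ ℕ) = n := by
      ext a; rw [Finsupp.tsub_apply, Finsupp.add_apply]; omega
    rw [hcancel]
    have hval : (((n + Finsupp.single k 1 : ℕ →₀ ℕ) k : ℕ) : ℝ) = (n k : ℝ) + 1 := by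
      rw [Finsupp.add_apply, Finsupp.single_eq_same]; push_cast; ring
    rw [hval]
    simp [En]
  · intro j hj
    have hne : (n + Finsupp.single k 1 - Finsupp.single j 1 : ℕ →₀ ℕ) ≠ n := by
      intro hEq
      have := congrArg (fun g : ℕ →₀ ℕ => g k) hEq
      simp [Finsupp.tsub_apply, Finsupp.add_apply, Finsupp.single_apply, hj] at this
    simp [hne]

lemma cre_off (f : ℕ → ℂ) (β : ℝ) (ω : ℕ → ℝ) (n x : ℕ →₀ ℕ)
    (hx : ∀ k, x ≠ n + Finsupp.single k 1) :
    fockCre f (fockGibbs β ω (fockBasis n)) x = 0 := by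
  unfold fockCre fockGibbs fockBasis
  have h : ∀ k : ℕ, f k * (Real.sqrt (x k : ℝ) : ℂ) *
      (((Real.exp (-β * ((x - Finsupp.single k 1 : ℕ →₀ ℕ).sum fun i v => ω i * (v : ℝ))) : ℝ) : ℂ) *
        (if (x - Finsupp.single k 1 : ℕ →₀ ℕ) = n then (1:ℂ) else 0)) = 0 := by
    intro k
    by_cases h0 : x k = 0
    · simp [h0]
    · have hne : (x - Finsupp.single k 1 : ℕ →₀ ℕ) ≠ n := by
        intro hEq
        apply hx k
        rw [← hEq]
        exact (tsub_add_cancel_of_le (Finsupp.single_le_iff.2 (by omega))).symm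
      simp [hne]
  exact (tsum_congr h).trans tsum_zero

lemma inner_eq (f : ℕ → ℂ) (β : ℝ) (ω : ℕ → ℝ) (n : ℕ →₀ ℕ) :
    (∑' x : ℕ →₀ ℕ, ‖fockCre f (fockGibbs β ω (fockBasis n)) x‖ ^ 2)
      = ∑' k : ℕ, ‖f k‖ ^ 2 * (((n k : ℝ) + 1) * Real.exp (-(2 * β) * En ω n)) := by
  have hinj : Function.Injective (fun k : ℕ => n + Finsupp.single k 1) := by
    intro a b hab
    by_contra hne
    have := congrArg (fun g : ℕ →₀ ℕ => g a) hab
    simp only [Finsupp.add_apply, Finsupp.single_eq_same, Finsupp.single_apply,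
      if_neg (Ne.symm hne)] at this
    omega
  have hsupp : Function.support (fun x => ‖fockCre f (fockGibbs β ω (fockBasis n)) x‖ ^ 2)
      ⊆ Set.range (fun k : ℕ => n + Finsupp.single k 1) := by
    intro x hxne
    by_contra hxr
    apply hxne
    have hx : ∀ k, x ≠ n + Finsupp.single k 1 := by
      intro k hk
      exact hxr ⟨k, hk.symm⟩
    simp [cre_off f β ω n x hx]
  rw [← hinj.tsum_eq hsupp]
  refine tsum_congr fun k => ?_
  rw [cre_on f β ω n k]
  rw [norm_mul, norm_mul, Complex.norm_real, Complex.norm_real, Real.norm_eq_abs,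
    Real.norm_eq_abs, abs_of_nonneg (Real.sqrt_nonneg _), abs_of_nonneg (Real.exp_pos _).le]
  have h1 : Real.sqrt ((n k : ℝ) + 1) ^ 2 = (n k : ℝ) + 1 :=
    Real.sq_sqrt (by positivity)
  have h2 : Real.exp (-β * En ω n) ^ 2 = Real.exp (-(2 * β) * En ω n) := by
    rw [sq, ← Real.exp_add]; congr 1; ring
  rw [mul_pow, mul_pow, h1, h2]
  ring

lemma tsum_energy_le (ω : ℕ → ℝ) (c : ℝ) (hωnn : ∀ k, 0 ≤ ω k)
    (hZ : Summable fun n : ℕ →₀ ℕ => Real.exp (-c * En ω n))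
    (hdiff : DifferentiableAt ℝ (Ztr ω) c) :
    Summable (fun n : ℕ →₀ ℕ => En ω n * Real.exp (-c * En ω n)) ∧
      (∑' n : ℕ →₀ ℕ, En ω n * Real.exp (-c * En ω n)) ≤ -(deriv (Ztr ω) c) := by
  have hEnn := En_nonneg hωnn
  have key : ∀ F : Finset (ℕ →₀ ℕ),
      ∑ n ∈ F, En ω n * Real.exp (-c * En ω n) ≤ -(deriv (Ztr ω) c) := by
    intro F
    have hZs : ∀ y, c ≤ y → Summable fun n : ℕ →₀ ℕ => Real.exp (-y * En ω n) := by
      intro y hy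
      refine hZ.of_nonneg_of_le (fun n => (Real.exp_pos _).le)
        (fun n => Real.exp_le_exp.2 ?_)
      nlinarith [hEnn n]
    have hmono : (𝓝[>] c) ≤ (𝓝[≠] c) :=
      nhdsWithin_mono _ fun y hy => by
        simp only [Set.mem_compl_iff, Set.mem_singleton_iff]
        exact ne_of_gt hy
    have hslope : Tendsto (slope (Ztr ω) c) (𝓝[>] c) (𝓝 (deriv (Ztr ω) c)) :=
      (hasDerivAt_iff_tendsto_slope.mp hdiff.hasDerivAt).mono_left hmono
    have hder : ∀ n : ℕ →₀ ℕ, HasDerivAt (fun s : ℝ => Real.exp (-s * En ω n))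
        (-(En ω n * Real.exp (-c * En ω n))) c := by
      intro n
      have h1 : HasDerivAt (fun s : ℝ => -s * En ω n) (-(En ω n)) c := by
        simpa using ((hasDerivAt_id c).neg.mul_const (En ω n))
      have := h1.exp
      convert this using 1
      ring
    have hFt : Tendsto (fun y => ∑ n ∈ F, slope (fun s => Real.exp (-s * En ω n)) c y)
        (𝓝[>] c) (𝓝 (∑ n ∈ F, -(En ω n * Real.exp (-c * En ω n)))) :=
      tendsto_finset_sum _ fun n _ =>
        (hasDerivAt_iff_tendsto_slope.mp (hder n)).mono_left hmono
    have hle : ∀ᶠ y in 𝓝[>] c, slope (Ztr ω) c y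
        ≤ ∑ n ∈ F, slope (fun s => Real.exp (-s * En ω n)) c y := by
      refine eventually_nhdsWithin_of_forall fun y hy => ?_
      have hcy : c < y := hy
      have hpos : (0:ℝ) < y - c := sub_pos.2 hcy
      have hsy := hZs y hcy.le
      have hFsub : ∑ n ∈ F, (Real.exp (-c * En ω n) - Real.exp (-y * En ω n))
          ≤ ∑' n : ℕ →₀ ℕ, (Real.exp (-c * En ω n) - Real.exp (-y * En ω n)) :=
        Summable.sum_le_tsum F (fun n _ => sub_nonneg.2 (Real.exp_le_exp.2 (by nlinarith [hEnn n])))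
          (hZ.sub hsy)
      have htsub : ∑' n : ℕ →₀ ℕ, (Real.exp (-c * En ω n) - Real.exp (-y * En ω n))
          = Ztr ω c - Ztr ω y := Summable.tsum_sub hZ hsy
      rw [htsub] at hFsub
      have hZy : Ztr ω y - Ztr ω c
          ≤ ∑ n ∈ F, (Real.exp (-y * En ω n) - Real.exp (-c * En ω n)) := by
        have h2 : ∑ n ∈ F, (Real.exp (-y * En ω n) - Real.exp (-c * En ω n))
            = -(∑ n ∈ F, (Real.exp (-c * En ω n) - Real.exp (-y * En ω n))) := by
          rw [← Finset.sum_neg_distrib]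
          exact Finset.sum_congr rfl fun n _ => by ring
        rw [h2]
        linarith
      rw [slope_def_field]
      calc (Ztr ω y - Ztr ω c) / (y - c)
          ≤ (∑ n ∈ F, (Real.exp (-y * En ω n) - Real.exp (-c * En ω n))) / (y - c) :=
            (div_le_div_iff_of_pos_right hpos).2 hZy
        _ = ∑ n ∈ F, slope (fun s => Real.exp (-s * En ω n)) c y := by
            rw [Finset.sum_div]
            exact Finset.sum_congr rfl fun n _ => (slope_def_field (fun s => Real.exp (-s * En ω n)) c y).symm
    have hfin := le_of_tendsto_of_tendsto hslope hFt hle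
    have h3 : ∑ n ∈ F, -(En ω n * Real.exp (-c * En ω n))
        = -∑ n ∈ F, En ω n * Real.exp (-c * En ω n) := Finset.sum_neg_distrib _
    rw [h3] at hfin
    linarith
  have hnn : ∀ n : ℕ →₀ ℕ, 0 ≤ En ω n * Real.exp (-c * En ω n) :=
    fun n => mul_nonneg (hEnn n) (Real.exp_pos _).le
  have hs : Summable (fun n : ℕ →₀ ℕ => En ω n * Real.exp (-c * En ω n)) :=
    summable_of_sum_le hnn key
  exact ⟨hs, Summable.tsum_le_of_sum_le hs key⟩

/-- **Hilbert–Schmidt bound:** `‖a†(f) e^{−βH_B}‖²_HS ≤ ‖f‖² [ −(1/m)(d/d(2β)) + 1 ] Z(2β)`. -/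
theorem hs_bound_cre_gibbs (ω : ℕ → ℝ) (f : ℕ → ℂ) (m β : ℝ) (hm : 0 < m) (hω : ∀ k, m ≤ ω k) (hβ : 0 < β)
    (hf : Summable fun k => ‖f k‖ ^ 2)
    (hsum : ∀ b > (0 : ℝ), Summable fun k => Real.exp (-b * ω k))
    (hp : ∀ p : ℕ, p ≤ 2 → Summable fun k => ω k ^ p * Real.exp (-(2 * β) * ω k))
    (hZ : Summable fun n : ℕ →₀ ℕ => Real.exp (-(2 * β) * (n.sum fun k v => ω k * (v : ℝ))))
    (hdiff : DifferentiableAt ℝ (Ztr ω) (2 * β)) :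
    (∑' n : ℕ →₀ ℕ, ∑' x : ℕ →₀ ℕ, ‖fockCre f (fockGibbs β ω (fockBasis n)) x‖ ^ 2) ≤
      (∑' k : ℕ, ‖f k‖ ^ 2) *
        ((1 / m) * (-(deriv (Ztr ω) (2 * β))) + Ztr ω (2 * β)) := by
  have hωnn : ∀ k, 0 ≤ ω k := fun k => hm.le.trans (hω k)
  have hZ' : Summable fun n : ℕ →₀ ℕ => Real.exp (-(2 * β) * En ω n) := hZ
  obtain ⟨hQs, hQle⟩ := tsum_energy_le ω (2 * β) hωnn hZ' hdiff
  have hT : 0 ≤ ∑' k : ℕ, ‖f k‖ ^ 2 := tsum_nonneg fun k => sq_nonneg _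
  have hbk : ∀ (n : ℕ →₀ ℕ) (k : ℕ),
      ‖f k‖ ^ 2 * (((n k : ℝ) + 1) * Real.exp (-(2 * β) * En ω n))
        ≤ ‖f k‖ ^ 2 * ((1 + En ω n / m) * Real.exp (-(2 * β) * En ω n)) := by
    intro n k
    have h1 : ((n k : ℝ) + 1) ≤ 1 + En ω n / m := by
      have h2 := mode_le hm hω n k
      have h3 : (n k : ℝ) ≤ En ω n / m := by
        rw [le_div_iff₀ hm]; nlinarith
      linarith
    have hek : (0:ℝ) ≤ Real.exp (-(2 * β) * En ω n) := (Real.exp_pos _).le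
    exact mul_le_mul_of_nonneg_left
      (mul_le_mul_of_nonneg_right h1 hek) (sq_nonneg _)
  have hBn : ∀ n : ℕ →₀ ℕ,
      (∑' k : ℕ, ‖f k‖ ^ 2 * (((n k : ℝ) + 1) * Real.exp (-(2 * β) * En ω n)))
        ≤ (∑' k : ℕ, ‖f k‖ ^ 2) * ((1 + En ω n / m) * Real.exp (-(2 * β) * En ω n)) := by
    intro n
    rw [← tsum_mul_right]
    refine Summable.tsum_le_tsum (fun k => hbk n k) ?_ (hf.mul_right _)
    exact Summable.of_nonneg_of_le (fun k => by positivity) (fun k => hbk n k)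
      (hf.mul_right _)
  have hBs : Summable (fun n : ℕ →₀ ℕ =>
      (1 + En ω n / m) * Real.exp (-(2 * β) * En ω n)) := by
    have hEq : (fun n : ℕ →₀ ℕ => (1 + En ω n / m) * Real.exp (-(2 * β) * En ω n))
        = fun n => Real.exp (-(2 * β) * En ω n)
            + (1 / m) * (En ω n * Real.exp (-(2 * β) * En ω n)) := by
      funext n; field_simp
    rw [hEq]
    exact hZ'.add (hQs.mul_left _)
  have hLs : Summable (fun n : ℕ →₀ ℕ =>
      ∑' x : ℕ →₀ ℕ, ‖fockCre f (fockGibbs β ω (fockBasis n)) x‖ ^ 2) := by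
    refine Summable.of_nonneg_of_le (fun n => tsum_nonneg fun x => sq_nonneg _)
      (fun n => ?_) (hBs.mul_left (∑' k : ℕ, ‖f k‖ ^ 2))
    rw [inner_eq f β ω n]
    exact hBn n
  have hZval : Ztr ω (2 * β) = ∑' n : ℕ →₀ ℕ, Real.exp (-(2 * β) * En ω n) := rfl
  calc (∑' n : ℕ →₀ ℕ, ∑' x : ℕ →₀ ℕ, ‖fockCre f (fockGibbs β ω (fockBasis n)) x‖ ^ 2)
      ≤ ∑' n : ℕ →₀ ℕ, (∑' k : ℕ, ‖f k‖ ^ 2)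
          * ((1 + En ω n / m) * Real.exp (-(2 * β) * En ω n)) := by
        refine Summable.tsum_le_tsum (fun n => ?_) hLs (hBs.mul_left _)
        rw [inner_eq f β ω n]
        exact hBn n
    _ = (∑' k : ℕ, ‖f k‖ ^ 2) * (∑' n : ℕ →₀ ℕ,
          (1 + En ω n / m) * Real.exp (-(2 * β) * En ω n)) := tsum_mul_left
    _ = (∑' k : ℕ, ‖f k‖ ^ 2) * (Ztr ω (2 * β)
          + (1 / m) * ∑' n : ℕ →₀ ℕ, En ω n * Real.exp (-(2 * β) * En ω n)) := by
        congr 1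
        have hEq : (fun n : ℕ →₀ ℕ => (1 + En ω n / m) * Real.exp (-(2 * β) * En ω n))
            = fun n => Real.exp (-(2 * β) * En ω n)
                + (1 / m) * (En ω n * Real.exp (-(2 * β) * En ω n)) := by
          funext n; field_simp
        rw [hEq, Summable.tsum_add hZ' (hQs.mul_left _), tsum_mul_left, hZval]
    _ ≤ (∑' k : ℕ, ‖f k‖ ^ 2) *
          ((1 / m) * (-(deriv (Ztr ω) (2 * β))) + Ztr ω (2 * β)) := by
        apply mul_le_mul_of_nonneg_left _ hT
        have h5 : (1 / m) * (∑' n : ℕ →₀ ℕ, En ω n * Real.exp (-(2 * β) * En ω n))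
            ≤ (1 / m) * (-(deriv (Ztr ω) (2 * β))) :=
          mul_le_mul_of_nonneg_left hQle (by positivity)
        linarith
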